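/- Let D be an L×N matrix whose columns have unit Euclidean norm, partitioned into M = N/d column-blocks D[ℓ] of size L×d. Then the block-coherence μ_B = max_{ℓ≠r} (1/d)·ρ(D[ℓ]^H D[r]) satisfies 0 ≤ μ_B ≤ 1, where ρ denotes the largest singular value. -/

import Mathlib

open Matrix

noncomputable def rho {m n : Type*} [Fintype m] [Fintype n] [DecidableEq n]
    (A : Matrix m n ℂ) : ℝ :=
  ‖LinearMap.toContinuousLinearMap (Matrix.toEuclideanLin A)‖

noncomputable def enorm2 {n : Type*} [Fintype n] (v : n → ℂ) : ℝ :=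
  Real.sqrt (∑ i, ‖v i‖ ^ 2)

def blk {α β γ : Type*} (D : Matrix α (β × γ) ℂ) (ℓ : β) : Matrix α γ ℂ :=
  Matrix.of fun i j => D i (ℓ, j)

def blk2 {ι κ d₁ d₂ : Type*} (A : Matrix (ι × d₁) (κ × d₂) ℂ) (ℓ : ι) (r : κ) :
    Matrix d₁ d₂ ℂ :=
  Matrix.of fun i j => A (ℓ, i) (r, j)

noncomputable def rhoc {ι κ d : Type*} [Fintype ι] [Fintype κ] [Fintype d] [DecidableEq d]
    (A : Matrix (ι × d) (κ × d) ℂ) : ℝ :=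
  ⨆ r : κ, ∑ ℓ : ι, rho (blk2 A ℓ r)

noncomputable def vnorm1 {ι d : Type*} [Fintype ι] [Fintype d] (v : ι × d → ℂ) : ℝ :=
  ∑ ℓ : ι, enorm2 (fun j => v (ℓ, j))

noncomputable def vnormInf {ι d : Type*} [Fintype ι] [Fintype d] (v : ι × d → ℂ) : ℝ :=
  ⨆ ℓ : ι, enorm2 (fun j => v (ℓ, j))

noncomputable def pinv {α n : Type*} [Fintype α] [Fintype n] [DecidableEq n]
    (B : Matrix α n ℂ) : Matrix n α ℂ :=
  (Bᴴ * B)⁻¹ * Bᴴ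

noncomputable def muB {L M d : ℕ} (D : Matrix (Fin L) (Fin M × Fin d) ℂ) : ℝ :=
  ⨆ p : {p : Fin M × Fin M // p.1 ≠ p.2},
    (1 / (d : ℝ)) * rho ((blk D p.val.1)ᴴ * blk D p.val.2)

open scoped Matrix.Norms.L2Operator

lemma rho_eq_norm {m n : Type*} [Fintype m] [Fintype n] [DecidableEq m] [DecidableEq n]
    (A : Matrix m n ℂ) : rho A = ‖A‖ := rfl

lemma rho_nonneg {m n : Type*} [Fintype m] [Fintype n] [DecidableEq n]
    (A : Matrix m n ℂ) : 0 ≤ rho A := norm_nonneg _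

lemma rho_conjTranspose_mul_le {m n p : Type*} [Fintype m] [Fintype n] [Fintype p]
    [DecidableEq m] [DecidableEq n] [DecidableEq p]
    (A : Matrix m n ℂ) (B : Matrix m p ℂ) : rho (Aᴴ * B) ≤ rho A * rho B := by
  rw [rho_eq_norm, rho_eq_norm, rho_eq_norm]
  calc ‖Aᴴ * B‖ ≤ ‖Aᴴ‖ * ‖B‖ := Matrix.l2_opNorm_mul _ _
    _ = ‖A‖ * ‖B‖ := by rw [Matrix.l2_opNorm_conjTranspose]

lemma rho_le_sqrt_frob {m n : Type*} [Fintype m] [Fintype n] [DecidableEq n]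
    (A : Matrix m n ℂ) : rho A ≤ Real.sqrt (∑ i, ∑ j, ‖A i j‖ ^ 2) := by
  refine ContinuousLinearMap.opNorm_le_bound _ (Real.sqrt_nonneg _) fun x => ?_
  have hy : (LinearMap.toContinuousLinearMap (Matrix.toEuclideanLin A)) x
      = Matrix.toEuclideanLin A x := rfl
  rw [hy]
  have hxnorm : ‖x‖ ^ 2 = ∑ j, ‖x j‖ ^ 2 := by
    rw [EuclideanSpace.norm_eq, Real.sq_sqrt (Finset.sum_nonneg fun j _ => sq_nonneg _)]
  have hnorm : ‖Matrix.toEuclideanLin A x‖ ^ 2 ≤ (∑ i, ∑ j, ‖A i j‖ ^ 2) * ‖x‖ ^ 2 := by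
    have h1 : ‖Matrix.toEuclideanLin A x‖ ^ 2
        = ∑ i, ‖(Matrix.toEuclideanLin A x) i‖ ^ 2 := by
      rw [EuclideanSpace.norm_eq, Real.sq_sqrt (Finset.sum_nonneg fun i _ => sq_nonneg _)]
    rw [h1, hxnorm, Finset.sum_mul]
    refine Finset.sum_le_sum fun i _ => ?_
    have happ : (Matrix.toEuclideanLin A x) i = ∑ j, A i j * x j := rfl
    rw [happ]
    calc ‖∑ j, A i j * x j‖ ^ 2 ≤ (∑ j, ‖A i j‖ * ‖x j‖) ^ 2 := by
          refine pow_le_pow_left₀ (norm_nonneg _) ?_ 2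
          refine (norm_sum_le _ _).trans (le_of_eq ?_)
          simp [norm_mul]
      _ ≤ (∑ j, ‖A i j‖ ^ 2) * ∑ j, ‖x j‖ ^ 2 :=
          Finset.sum_mul_sq_le_sq_mul_sq _ _ _
  have h2 := Real.sqrt_le_sqrt hnorm
  rw [Real.sqrt_sq (norm_nonneg _), Real.sqrt_mul
    (Finset.sum_nonneg fun i _ => Finset.sum_nonneg fun j _ => sq_nonneg _),
    Real.sqrt_sq (norm_nonneg _)] at h2
  exact h2

theorem block_coherence_between_zero_and_one (L M d : ℕ) (hd : 0 < d)
    (D : Matrix (Fin L) (Fin M × Fin d) ℂ)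
    (hcol : ∀ c : Fin M × Fin d, enorm2 (fun i => D i c) = 1) :
    0 ≤ muB D ∧ muB D ≤ 1 := by
  have hdpos : (0 : ℝ) < d := by exact_mod_cast hd
  have hblk : ∀ ℓ : Fin M, rho (blk D ℓ) ≤ Real.sqrt d := by
    intro ℓ
    refine (rho_le_sqrt_frob _).trans (le_of_eq ?_)
    congr 1
    rw [Finset.sum_comm]
    have hcol' : ∀ j : Fin d, ∑ i, ‖blk D ℓ i j‖ ^ 2 = 1 := by
      intro j
      have h := hcol (ℓ, j)
      rw [enorm2, Real.sqrt_eq_one] at h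
      exact h
    calc ∑ j : Fin d, ∑ i : Fin L, ‖blk D ℓ i j‖ ^ 2
        = ∑ _j : Fin d, (1 : ℝ) := Finset.sum_congr rfl fun j _ => hcol' j
      _ = d := by simp
  have key : ∀ p : {p : Fin M × Fin M // p.1 ≠ p.2},
      (1 / (d : ℝ)) * rho ((blk D p.val.1)ᴴ * blk D p.val.2) ≤ 1 := by
    intro p
    have h1 : rho ((blk D p.val.1)ᴴ * blk D p.val.2) ≤ (d : ℝ) := by
      calc rho ((blk D p.val.1)ᴴ * blk D p.val.2)
          ≤ rho (blk D p.val.1) * rho (blk D p.val.2) := rho_conjTranspose_mul_le _ _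
        _ ≤ Real.sqrt d * Real.sqrt d := by
            exact mul_le_mul (hblk _) (hblk _) (rho_nonneg _) (Real.sqrt_nonneg _)
        _ = d := Real.mul_self_sqrt hdpos.le
    rw [one_div]
    calc (d : ℝ)⁻¹ * rho ((blk D p.val.1)ᴴ * blk D p.val.2)
        ≤ (d : ℝ)⁻¹ * d := by
          exact mul_le_mul_of_nonneg_left h1 (inv_nonneg.mpr hdpos.le)
      _ = 1 := inv_mul_cancel₀ hdpos.ne'
  constructor
  · exact Real.iSup_nonneg fun p =>
      mul_nonneg (by positivity) (rho_nonneg _)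
  · exact Real.iSup_le key zero_le_one
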